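/- arXiv:2201.03936 — 2 statements merged into one kernel-verified Lean document; each statement's English description precedes it below -/
import Mathlib

section
/- Let p be an odd prime, H the Heisenberg group of order p³, α ∈ ℤ/pℤ, and ∘ the operation g ∘ h = g · h · [g,h]^α. Then the commutator of g and h in the group (H, ∘) equals [g,h]^{1+2α}; in particular (H, ∘) is abelian if and only if α = −1/2 in ℤ/pℤ. -/
/-- The Heisenberg group of order `p³`,
`H = ⟨u, v, k : uᵖ = vᵖ = kᵖ = 1, [u,v] = k, [u,k] = [v,k] = 1⟩`,
modelled on triples `⟨i, j, q⟩` representing the normal form `uⁱ vʲ k^q`. -/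
@[ext] structure Heis (p : ℕ) where
  x : ZMod p
  y : ZMod p
  z : ZMod p

namespace Heis

variable {p : ℕ}

instance : Mul (Heis p) := ⟨fun a b => ⟨a.x + b.x, a.y + b.y, a.z + b.z - a.y * b.x⟩⟩
instance : One (Heis p) := ⟨⟨0, 0, 0⟩⟩
instance : Inv (Heis p) := ⟨fun a => ⟨-a.x, -a.y, -a.z - a.y * a.x⟩⟩

lemma mul_def (a b : Heis p) :
    a * b = ⟨a.x + b.x, a.y + b.y, a.z + b.z - a.y * b.x⟩ := rfl
lemma one_def : (1 : Heis p) = ⟨0, 0, 0⟩ := rfl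
lemma inv_def (a : Heis p) : a⁻¹ = ⟨-a.x, -a.y, -a.z - a.y * a.x⟩ := rfl

instance : Group (Heis p) where
  mul_assoc a b c := by ext <;> simp [mul_def] <;> ring
  one_mul a := by ext <;> simp [mul_def, one_def]
  mul_one a := by ext <;> simp [mul_def, one_def]
  inv_mul_cancel a := by ext <;> simp [mul_def, one_def, inv_def] <;> ring

/-- The generator `u`. -/
def u : Heis p := ⟨1, 0, 0⟩
/-- The generator `v`. -/
def v : Heis p := ⟨0, 1, 0⟩
/-- The generator `k = [u, v]`. -/
def k : Heis p := ⟨0, 0, 1⟩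

end Heis

open scoped commutatorElement

namespace Heis

lemma pow_central {p : ℕ} (c : ZMod p) (n : ℕ) :
    (⟨0, 0, c⟩ : Heis p) ^ n = ⟨0, 0, (n : ZMod p) * c⟩ := by
  induction n with
  | zero => ext <;> simp [one_def]
  | succ n ih => rw [pow_succ, ih]; ext <;> simp [mul_def] <;> push_cast <;> ring

lemma comm_eq {p : ℕ} (g h : Heis p) :
    ⁅g, h⁆ = (⟨0, 0, g.x * h.y - g.y * h.x⟩ : Heis p) := by
  show g * h * g⁻¹ * h⁻¹ = _
  ext <;> simp [mul_def, inv_def] <;> ring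

end Heis

/-- For `p` an odd prime, `H` the Heisenberg group of order `p³`, `α ∈ ℤ/pℤ`,
and `∘` the operation `g ∘ h = g·h·[g,h]^α`: the commutator of `g` and `h` in
the group `(H, ∘)` (inverses in `(H,∘)` coincide with those in `(H,·)`) equals
`[g,h]^(1+2α)`; in particular `(H, ∘)` is abelian iff `α = -1/2` in `ℤ/pℤ`. -/
theorem stmt17 (p : ℕ) (hp : p.Prime) (hodd : Odd p) (α : ZMod p) :
    let circ : Heis p → Heis p → Heis p := fun g h => g * h * ⁅g, h⁆ ^ α.val
    (∀ g h : Heis p,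
      circ (circ (circ g h) g⁻¹) h⁻¹ = ⁅g, h⁆ ^ (1 + 2 * α).val) ∧
    ((∀ g h : Heis p, circ g h = circ h g) ↔ α = -(2⁻¹ : ZMod p)) := by
  intro circ
  haveI : Fact p.Prime := ⟨hp⟩
  have hcast : ∀ b : ZMod p, ((b.val : ℕ) : ZMod p) = b := fun b => by
    rw [ZMod.natCast_val, ZMod.cast_id]
  constructor
  · intro g h
    simp only [circ, Heis.comm_eq, Heis.pow_central, hcast]
    ext
    · simp only [Heis.mul_def, Heis.inv_def]; ring
    · simp only [Heis.mul_def, Heis.inv_def]; ring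
    · simp only [Heis.mul_def, Heis.inv_def]; ring
  · have key : ∀ g h : Heis p, circ g h = circ h g ↔
        (1 + 2 * α) * (g.x * h.y - g.y * h.x) = 0 := by
      intro g h
      simp only [circ, Heis.comm_eq, Heis.pow_central, hcast]
      constructor
      · intro e
        have h3 := congrArg Heis.z e
        simp only [Heis.mul_def] at h3
        linear_combination h3
      · intro e
        ext
        · simp only [Heis.mul_def]; ring
        · simp only [Heis.mul_def]; ring
        · simp only [Heis.mul_def]; linear_combination e
    have h2 : (2 : ZMod p) ≠ 0 := by
      intro h0
      have h0' : ((2 : ℕ) : ZMod p) = 0 := by exact_mod_cast h0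
      have hd := (ZMod.natCast_eq_zero_iff 2 p).mp h0'
      rcases (Nat.prime_dvd_prime_iff_eq hp Nat.prime_two).mp hd with rfl
      simp [Nat.odd_iff] at hodd
    constructor
    · intro hab
      have hk := (key Heis.u Heis.v).mp (hab _ _)
      simp [Heis.u, Heis.v] at hk
      field_simp
      linear_combination hk
    · intro hα g h
      rw [key]
      have h1 : (1 + 2 * α) = 0 := by rw [hα]; field_simp; ring
      rw [h1, zero_mul]
end

section
/- Let p be an odd prime, H the Heisenberg group of order p³, and α ∈ ℤ/pℤ with α ≠ −1/2. Then the map B(uⁱ · vʲ · k^r) = u^{iα} · v^{jα} · k^{α²(r − ijα)(1+2α)^{-1}} (for 0 ≤ i,j,r < p, exponents read mod p) is a Rota–Baxter operator on H, and ι(B(g)) = ι(g^α) for all g ∈ H. -/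
/-- A Rota–Baxter operator on a group `G`. -/
def IsRotaBaxter {G : Type*} [Group G] (B : G → G) : Prop :=
  ∀ g h : G, B (g * B g * h * (B g)⁻¹) = B g * B h

namespace Heis

variable {p : ℕ}

lemma u_pow (n : ℕ) : (u : Heis p) ^ n = ⟨(n : ZMod p), 0, 0⟩ := by
  induction n with
  | zero => simp [one_def]
  | succ n ih => rw [pow_succ, ih]; ext <;> simp [mul_def, u]

lemma v_pow (n : ℕ) : (v : Heis p) ^ n = ⟨0, (n : ZMod p), 0⟩ := by
  induction n with
  | zero => simp [one_def]
  | succ n ih => rw [pow_succ, ih]; ext <;> simp [mul_def, v]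

lemma k_pow (n : ℕ) : (k : Heis p) ^ n = ⟨0, 0, (n : ZMod p)⟩ := by
  induction n with
  | zero => simp [one_def]
  | succ n ih => rw [pow_succ, ih]; ext <;> simp [mul_def, k]

lemma pow_x (g : Heis p) (n : ℕ) : (g ^ n).x = n * g.x := by
  induction n with
  | zero => simp [one_def]
  | succ n ih => rw [pow_succ, mul_def]; simp [ih]; ring

lemma pow_y (g : Heis p) (n : ℕ) : (g ^ n).y = n * g.y := by
  induction n with
  | zero => simp [one_def]
  | succ n ih => rw [pow_succ, mul_def]; simp [ih]; ring

lemma conj_eq_of_xy (a b : Heis p) (hx : a.x = b.x) (hy : a.y = b.y) :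
    MulAut.conj a = MulAut.conj b := by
  refine DFunLike.ext _ _ fun h => ?_
  show a * h * a⁻¹ = b * h * b⁻¹
  ext <;> simp [mul_def, inv_def, hx, hy] <;> ring

end Heis

/-- For `p` an odd prime, `H` the Heisenberg group of order `p³` and
`α ∈ ℤ/pℤ` with `α ≠ -1/2`, the map
`B(uⁱ·vʲ·k^r) = u^(iα) · v^(jα) · k^(α²(r - ijα)(1+2α)⁻¹)`
is a Rota–Baxter operator on `H` with `ι(B(g)) = ι(g^α)` for all `g`. -/
theorem stmt18 (p : ℕ) (hp : p.Prime) (hodd : Odd p) (α : ZMod p)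
    (hα : α ≠ -(2⁻¹ : ZMod p)) :
    ∃ B : Heis p → Heis p,
      (∀ i j r : ZMod p,
        B (Heis.u ^ i.val * Heis.v ^ j.val * Heis.k ^ r.val) =
          Heis.u ^ (α * i).val * Heis.v ^ (α * j).val *
            Heis.k ^ (α ^ 2 * (r - i * j * α) * (1 + 2 * α)⁻¹).val) ∧
      IsRotaBaxter B ∧
      ∀ g : Heis p, MulAut.conj (B g) = MulAut.conj (g ^ α.val) := by
  
  haveI : Fact p.Prime := ⟨hp⟩
  have h2 : (2 : ZMod p) ≠ 0 := by
    intro h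
    have hd : (p : ℕ) ∣ 2 :=
      (ZMod.natCast_eq_zero_iff 2 p).mp (by exact_mod_cast h)
    have hp2 : p = 2 := (Nat.prime_dvd_prime_iff_eq hp Nat.prime_two).mp hd
    rw [hp2] at hodd
    exact (by norm_num : ¬ Odd 2) hodd
  have hden : (1 + 2 * α) ≠ 0 := by
    intro h
    apply hα
    have h4 : (2 : ZMod p) * α = 2 * -2⁻¹ := by
      rw [mul_neg, mul_inv_cancel₀ h2]; linear_combination h
    exact mul_left_cancel₀ h2 h4
  refine ⟨fun a => ⟨α * a.x, α * a.y, α ^ 2 * (a.z - a.x * a.y * α) * (1 + 2 * α)⁻¹⟩,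
    ?_, ?_, ?_⟩
  · intro i j r
    rw [Heis.u_pow, Heis.v_pow, Heis.k_pow, Heis.u_pow, Heis.v_pow, Heis.k_pow]
    simp only [ZMod.natCast_val, ZMod.cast_id]
    ext <;> simp only [Heis.mul_def] <;> ring
  · intro g h
    ext <;> (simp only [Heis.mul_def, Heis.inv_def]; try field_simp) <;> ring_nf
    linear_combination (-(α ^ 2 * g.y * h.x)) * mul_inv_cancel₀ (show (1 + α * 2) ≠ 0 by rwa [mul_comm])
  · intro g
    apply Heis.conj_eq_of_xy <;>
      simp [Heis.pow_x, Heis.pow_y, ZMod.natCast_val, ZMod.cast_id, mul_comm]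
end
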